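/- Let N ≥ 2, r > 0, K > 0, and let w : [r/2, r] → ℝ be continuous, nonvanishing, with ∫_{r/2}^{r} ds / w(s)² ≤ K r^{N + 2√(N-1) - 1}. Then |∫_{r/2}^{r} w(s) ds| ≥ M' r^{-N/2 - √(N-1) + 2}, where M' = 2^{-3/2} K^{-1/2}. -/

import Mathlib

open Set intervalIntegral MeasureTheory

theorem stmt_8 (N : ℕ) (hN : 2 ≤ N) (r K : ℝ) (hr : 0 < r) (hK : 0 < K)
    (w : ℝ → ℝ) (hw : ContinuousOn w (Icc (r / 2) r))
    (hnv : ∀ s ∈ Icc (r / 2) r, w s ≠ 0)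
    (hint : (∫ s in (r / 2)..r, 1 / (w s) ^ 2)
      ≤ K * r ^ ((N : ℝ) + 2 * Real.sqrt ((N : ℝ) - 1) - 1)) :
    (2 : ℝ) ^ (-(3 : ℝ) / 2) * K ^ (-(1 : ℝ) / 2) *
        r ^ (-(N : ℝ) / 2 - Real.sqrt ((N : ℝ) - 1) + 2)
      ≤ |∫ s in (r / 2)..r, w s| := by
  have hle : r / 2 ≤ r := by linarith
  set e : ℝ := (N : ℝ) + 2 * Real.sqrt ((N : ℝ) - 1) - 1 with he
  set μ : Measure ℝ := volume.restrict (Ioc (r / 2) r) with hμ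
  haveI : IsFiniteMeasure μ := by
    constructor
    rw [hμ, Measure.restrict_apply_univ, Real.volume_Ioc]
    exact ENNReal.ofReal_lt_top
  have habs : ∀ s ∈ Icc (r / 2) r, 0 < |w s| := fun s hs => abs_pos.mpr (hnv s hs)
  -- any function continuous on Icc is in every Lp of μ
  have mem : ∀ (f : ℝ → ℝ), ContinuousOn f (Icc (r / 2) r) → ∀ p : ENNReal,
      MemLp f p μ := by
    intro f hf p
    obtain ⟨C, hC⟩ := isCompact_Icc.exists_bound_of_continuousOn hf
    refine MemLp.of_bound ((hf.mono Ioc_subset_Icc_self).aestronglyMeasurable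
      measurableSet_Ioc) C ?_
    filter_upwards [ae_restrict_mem measurableSet_Ioc] with x hx
    exact hC x (Ioc_subset_Icc_self hx)
  set f : ℝ → ℝ := fun s => |w s| ^ (-(2 : ℝ) / 3) with hf
  set g : ℝ → ℝ := fun s => |w s| ^ ((2 : ℝ) / 3) with hg
  have hfc : ContinuousOn f (Icc (r / 2) r) :=
    hw.abs.rpow_const fun s hs => Or.inl (ne_of_gt (habs s hs))
  have hgc : ContinuousOn g (Icc (r / 2) r) :=
    hw.abs.rpow_const fun s hs => Or.inr (by norm_num)
  have hpq : Real.HolderConjugate 3 (3 / 2) := Real.holderConjugate_iff.mpr ⟨by norm_num, by norm_num⟩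
  have holder := integral_mul_le_Lp_mul_Lq_of_nonneg (μ := μ) hpq
    (Filter.Eventually.of_forall fun x => Real.rpow_nonneg (abs_nonneg _) _)
    (Filter.Eventually.of_forall fun x => Real.rpow_nonneg (abs_nonneg _) _)
    (mem f hfc _) (mem g hgc _)
  -- the product integral is r/2
  have hfg : ∫ a, f a * g a ∂μ = r / 2 := by
    rw [hμ]
    rw [setIntegral_congr_fun measurableSet_Ioc (g := fun _ => (1 : ℝ))]
    · simp [Real.volume_Ioc]
      rw [max_eq_left (by linarith)]
      ring
    · intro s hs
      have h0 : 0 < |w s| := habs s (Ioc_subset_Icc_self hs)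
      simp only [hf, hg]
      rw [← Real.rpow_add h0]
      norm_num
  -- ∫ f^3 = ∫ 1/w²
  have hf3 : ∫ a, f a ^ (3 : ℝ) ∂μ = ∫ s in (r / 2)..r, 1 / (w s) ^ 2 := by
    rw [intervalIntegral.integral_of_le hle, hμ]
    refine setIntegral_congr_fun measurableSet_Ioc fun s hs => ?_
    have h0 : 0 < |w s| := habs s (Ioc_subset_Icc_self hs)
    simp only [hf]
    rw [← Real.rpow_mul (abs_nonneg _)]
    norm_num
  -- ∫ g^(3/2) = |∫ w|
  have hsign : (∀ s ∈ Icc (r / 2) r, 0 < w s) ∨ (∀ s ∈ Icc (r / 2) r, w s < 0) := by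
    rcases (hnv r ⟨hle, le_refl r⟩).lt_or_gt with h | h
    · right
      intro s hs
      by_contra hpos
      push_neg at hpos
      have hws : 0 < w s := lt_of_le_of_ne hpos (Ne.symm (hnv s hs))
      have hsub : Icc s r ⊆ Icc (r / 2) r := Icc_subset_Icc hs.1 le_rfl
      have := intermediate_value_Icc' hs.2 (hw.mono hsub) (a := s) (b := r)
        ⟨le_of_lt h, le_of_lt hws⟩
      obtain ⟨t, ht, hwt⟩ := this
      exact hnv t (hsub ht) hwt
    · left
      intro s hs
      by_contra hpos
      push_neg at hpos
      have hws : w s < 0 := lt_of_le_of_ne hpos (hnv s hs)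
      have hsub : Icc s r ⊆ Icc (r / 2) r := Icc_subset_Icc hs.1 le_rfl
      have := intermediate_value_Icc hs.2 (hw.mono hsub) (a := s) (b := r)
        ⟨le_of_lt hws, le_of_lt h⟩
      obtain ⟨t, ht, hwt⟩ := this
      exact hnv t (hsub ht) hwt
  have hg32 : ∫ a, g a ^ (3 / 2 : ℝ) ∂μ = |∫ s in (r / 2)..r, w s| := by
    rw [intervalIntegral.integral_of_le hle]
    have habs' : ∫ a, g a ^ (3 / 2 : ℝ) ∂μ = ∫ s in Ioc (r / 2) r, |w s| := by
      rw [hμ]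
      refine setIntegral_congr_fun measurableSet_Ioc fun s hs => ?_
      have h0 : 0 < |w s| := habs s (Ioc_subset_Icc_self hs)
      simp only [hg]
      rw [← Real.rpow_mul (abs_nonneg _)]
      norm_num
    rw [habs']
    rcases hsign with hpos | hneg
    · rw [abs_of_nonneg (setIntegral_nonneg measurableSet_Ioc fun s hs =>
        (hpos s (Ioc_subset_Icc_self hs)).le)]
      exact setIntegral_congr_fun measurableSet_Ioc fun s hs =>
        abs_of_pos (hpos s (Ioc_subset_Icc_self hs))
    · rw [abs_of_nonpos (setIntegral_nonpos measurableSet_Ioc fun s hs =>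
        (hneg s (Ioc_subset_Icc_self hs)).le), ← MeasureTheory.integral_neg]
      exact setIntegral_congr_fun measurableSet_Ioc fun s hs =>
        abs_of_neg (hneg s (Ioc_subset_Icc_self hs))
  -- put things together
  set A : ℝ := ∫ s in (r / 2)..r, 1 / (w s) ^ 2 with hA
  set B : ℝ := |∫ s in (r / 2)..r, w s| with hB
  rw [hfg, hf3, hg32] at holder
  have hA0 : 0 ≤ A := by
    rw [hA, intervalIntegral.integral_of_le hle]
    exact setIntegral_nonneg measurableSet_Ioc fun s hs => by positivity
  have hB0 : 0 ≤ B := abs_nonneg _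
  have hcube : (r / 2) ^ (3 : ℕ) ≤ A * B ^ (2 : ℕ) := by
    calc (r / 2) ^ (3 : ℕ) ≤ (A ^ (1/3 : ℝ) * B ^ (1 / (3/2) : ℝ)) ^ (3 : ℕ) :=
          pow_le_pow_left₀ (by linarith) holder 3
      _ = A * B ^ (2 : ℕ) := by
          rw [mul_pow, ← Real.rpow_natCast (A ^ (1/3:ℝ)) 3,
            ← Real.rpow_natCast (B ^ (1/(3/2):ℝ)) 3,
            ← Real.rpow_mul hA0, ← Real.rpow_mul hB0]
          norm_num
  have hKe : 0 < K * r ^ e := by positivity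
  have hB2 : (r / 2) ^ (3:ℕ) ≤ (K * r ^ e) * B ^ (2:ℕ) :=
    le_trans hcube (mul_le_mul_of_nonneg_right hint (by positivity))
  set T : ℝ := (2 : ℝ) ^ (-(3 : ℝ) / 2) * K ^ (-(1 : ℝ) / 2) *
      r ^ (-(N : ℝ) / 2 - Real.sqrt ((N : ℝ) - 1) + 2) with hT
  have hT0 : 0 < T := by positivity
  have hTsq : T ^ (2:ℕ) * (K * r ^ e) = (r / 2) ^ (3:ℕ) := by
    rw [hT, he, mul_pow, mul_pow,
      ← Real.rpow_natCast ((2:ℝ) ^ (-(3:ℝ)/2)) 2,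
      ← Real.rpow_natCast (K ^ (-(1:ℝ)/2)) 2,
      ← Real.rpow_natCast (r ^ (-(N:ℝ)/2 - Real.sqrt ((N:ℝ)-1) + 2)) 2,
      ← Real.rpow_mul (by norm_num : (0:ℝ) ≤ 2), ← Real.rpow_mul hK.le,
      ← Real.rpow_mul hr.le]
    rw [div_pow]
    have h1 : K ^ ((-(1:ℝ)/2) * (2:ℕ)) = K⁻¹ := by
      norm_num
      rw [Real.rpow_neg_one]
    have h2 : (2:ℝ) ^ ((-(3:ℝ)/2) * (2:ℕ)) = 1 / 8 := by
      rw [show ((-(3:ℝ)/2) * (2:ℕ) : ℝ) = ((-3 : ℤ) : ℝ) by push_cast; ring,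
        Real.rpow_intCast]
      norm_num
    have h3 : r ^ (((-(N:ℝ)/2 - Real.sqrt ((N:ℝ)-1) + 2)) * (2:ℕ)) *
        r ^ ((N : ℝ) + 2 * Real.sqrt ((N : ℝ) - 1) - 1) = r ^ (3:ℝ) := by
      rw [← Real.rpow_add hr]
      push_cast
      ring_nf
    have hK' : K⁻¹ * K = 1 := inv_mul_cancel₀ hK.ne'
    have h4 : r ^ (3:ℝ) = r ^ (3:ℕ) := by
      rw [show (3:ℝ) = ((3:ℕ):ℝ) by norm_num, Real.rpow_natCast]
    calc (2:ℝ) ^ ((-(3:ℝ)/2) * (2:ℕ)) * K ^ ((-(1:ℝ)/2) * (2:ℕ)) *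
          r ^ ((-(N:ℝ)/2 - Real.sqrt ((N:ℝ)-1) + 2) * (2:ℕ)) *
          (K * r ^ ((N : ℝ) + 2 * Real.sqrt ((N : ℝ) - 1) - 1))
        = (r ^ ((-(N:ℝ)/2 - Real.sqrt ((N:ℝ)-1) + 2) * (2:ℕ)) *
            r ^ ((N : ℝ) + 2 * Real.sqrt ((N : ℝ) - 1) - 1)) *
          (K ^ ((-(1:ℝ)/2) * (2:ℕ)) * K) * (2:ℝ) ^ ((-(3:ℝ)/2) * (2:ℕ)) := by ring
      _ = r ^ (3:ℝ) * (K⁻¹ * K) * (1/8) := by rw [h3, h1, h2]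
      _ = r ^ (3:ℕ) / 2 ^ 3 := by rw [hK', h4]; ring
  have hTB : T ^ (2:ℕ) ≤ B ^ (2:ℕ) := by
    have h := hB2
    rw [← hTsq] at h
    nlinarith [hKe, h]
  calc T = Real.sqrt (T ^ 2) := by rw [Real.sqrt_sq hT0.le]
    _ ≤ Real.sqrt (B ^ 2) := Real.sqrt_le_sqrt hTB
    _ = B := Real.sqrt_sq hB0
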